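/- For p = (1/√3)(0,0,1,0,1,cos φ, sin φ) ∈ S⁶ ⊂ ℝ⁷ with any φ ∈ [0,2π), the cosine of the slant angle of the torus orbit through p, given by |x₃y₁y₂ - x₂y₀y₂ - x₂y₁y₃ - x₃y₀y₃|/√(αβ - (x₂²+x₃²)²) with coordinates p = (x₁,x₂,x₃,y₀,y₁,y₂,y₃), α = x₂²+x₃²+y₀²+y₁², β = x₂²+x₃²+y₂²+y₃², equals |cos φ|/3. -/

import Mathlib

noncomputable section

open Real

/-- For p = (1/√3)(0,0,1,0,1,cos φ,sin φ) ∈ S⁶, the cosine of the slant angle of the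
    torus orbit through p equals |cos φ|/3. -/
theorem stmt19 (phi : ℝ) (hphi : phi ∈ Set.Ico 0 (2 * π)) :
    let x1 : ℝ := 0
    let x2 : ℝ := 0
    let x3 : ℝ := 1 / Real.sqrt 3
    let y0 : ℝ := 0
    let y1 : ℝ := 1 / Real.sqrt 3
    let y2 : ℝ := cos phi / Real.sqrt 3
    let y3 : ℝ := sin phi / Real.sqrt 3
    |x3 * y1 * y2 - x2 * y0 * y2 - x2 * y1 * y3 - x3 * y0 * y3| /
        Real.sqrt ((x2 ^ 2 + x3 ^ 2 + y0 ^ 2 + y1 ^ 2) * (x2 ^ 2 + x3 ^ 2 + y2 ^ 2 + y3 ^ 2) -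
          (x2 ^ 2 + x3 ^ 2) ^ 2) =
      |cos phi| / 3 := by
  intro x1 x2 x3 y0 y1 y2 y3
  have hs : Real.sqrt 3 ^ 2 = 3 := Real.sq_sqrt (by norm_num)
  have hs0 : (0:ℝ) < Real.sqrt 3 := Real.sqrt_pos.mpr (by norm_num)
  have hpyth : sin phi ^ 2 + cos phi ^ 2 = 1 := sin_sq_add_cos_sq phi
  have harg : (x2 ^ 2 + x3 ^ 2 + y0 ^ 2 + y1 ^ 2) * (x2 ^ 2 + x3 ^ 2 + y2 ^ 2 + y3 ^ 2) -
      (x2 ^ 2 + x3 ^ 2) ^ 2 = 1 / 3 := by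
    simp only [x2, x3, y0, y1, y2, y3]
    field_simp
    nlinarith [hpyth, hs]
  rw [harg]
  have hnum : |x3 * y1 * y2 - x2 * y0 * y2 - x2 * y1 * y3 - x3 * y0 * y3| =
      |cos phi| / (3 * Real.sqrt 3) := by
    simp only [x2, x3, y0, y1, y2, y3]
    rw [show (1 / Real.sqrt 3 * (1 / Real.sqrt 3) * (cos phi / Real.sqrt 3) -
        0 * 0 * (cos phi / Real.sqrt 3) - 0 * (1 / Real.sqrt 3) * (sin phi / Real.sqrt 3) -
        1 / Real.sqrt 3 * 0 * (sin phi / Real.sqrt 3)) = cos phi / (3 * Real.sqrt 3) by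
      field_simp; rw [hs]; ring]
    rw [abs_div, abs_of_pos (show (0:ℝ) < 3 * Real.sqrt 3 by positivity)]
  rw [hnum]
  rw [show (1:ℝ)/3 = (1/Real.sqrt 3)^2 by field_simp; exact hs,
    Real.sqrt_sq (by positivity)]
  field_simp
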